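/- Let A, B, C, D ∈ ℂ with C ≠ 0, and suppose that either (i) A ≠ 1 and D = conj(B)·(1 − A)·(1 − conj(A))^{−1}, or (ii) A = 1 and |D| = |B|. Set ψ(z) = C·e^{Dz}, φ(z) = Az + B, ψ̂(z) = conj(C)·e^{conj(B)·z}, φ̂(z) = conj(A)·z + conj(D). Then for every entire function f : ℂ → ℂ, ∫_ℂ |ψ̂(z)·f(φ̂(z))|²·e^{−|z|²} dV(z) = ∫_ℂ |ψ(z)·f(φ(z))|²·e^{−|z|²} dV(z) (as an identity in [0,∞]). (This is the normality identity ‖W*f‖ = ‖Wf‖ with equal domains for the maximal weighted composition operator W = W_{ψ,φ,max}, whose adjoint is W_{ψ̂,φ̂,max}.) -/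

import Mathlib

open MeasureTheory Complex ComplexConjugate

/-- Rotation+translation on `ℂ` preserves Lebesgue measure. -/
lemma affine_measurePreserving (α β : ℂ) (hα : ‖α‖ = 1) :
    MeasurePreserving (fun w : ℂ => α * w + β) volume volume := by
  have hmem : α ∈ Metric.sphere (0 : ℂ) 1 := by
    simpa [mem_sphere_zero_iff_norm] using hα
  let c : Circle := ⟨α, hmem⟩
  have hrot : MeasurePreserving (fun w : ℂ => α * w) volume volume := by
    have h := (rotation c).measurePreserving
    have : (fun w : ℂ => α * w) = ⇑(rotation c) := by
      funext w; rw [rotation_apply]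
    rwa [this]
  exact (measurePreserving_add_right volume β).comp hrot

/-- the normality identity `‖W* f‖ = ‖W f‖` (as integrals in `[0,∞]`)
under condition (i) `A ≠ 1` and `D = B̄(1-A)(1-Ā)⁻¹`, or (ii) `A = 1` and `|D| = |B|`. -/
theorem wco_normal_identity (A B C D : ℂ) (hC : C ≠ 0)
    (hcond : (A ≠ 1 ∧ D = conj B * (1 - A) * (1 - conj A)⁻¹) ∨
      (A = 1 ∧ ‖D‖ = ‖B‖))
    (ψ φ ψh φh : ℂ → ℂ)
    (hψ : ∀ z : ℂ, ψ z = C * Complex.exp (D * z))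
    (hφ : ∀ z : ℂ, φ z = A * z + B)
    (hψh : ∀ z : ℂ, ψh z = conj C * Complex.exp (conj B * z))
    (hφh : ∀ z : ℂ, φh z = conj A * z + conj D) :
    ∀ f : ℂ → ℂ, Differentiable ℂ f →
      ∫⁻ z : ℂ, ENNReal.ofReal
          ((‖ψh z * f (φh z)‖) ^ 2 * Real.exp (-(‖z‖) ^ 2)) =
        ∫⁻ z : ℂ, ENNReal.ofReal
          ((‖ψ z * f (φ z)‖) ^ 2 * Real.exp (-(‖z‖) ^ 2)) := by
  intro f hf
  -- Find the affine change of variables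
  obtain ⟨α, β, hα1, h1, h2, h3, h4⟩ :
      ∃ α β : ℂ, α * conj α = 1 ∧ conj A * α = A ∧ conj A * β + conj D = B ∧
        (conj B - conj β) * α = D ∧ conj B * β + B * conj β = β * conj β := by
    rcases hcond with ⟨hA1, hD⟩ | ⟨hA1, hD⟩
    · rcases eq_or_ne A 0 with hA0 | hA0
      · subst hA0
        refine ⟨1, 0, by simp, by simp, ?_, ?_, by simp⟩
        · rw [hD]; simp
        · rw [hD]; simp
      · have hcA0 : conj A ≠ 0 := by simpa using hA0
        have h1A : (1 : ℂ) - A ≠ 0 := sub_ne_zero.2 fun h => hA1 h.symm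
        have h1cA : (1 : ℂ) - conj A ≠ 0 := by
          refine sub_ne_zero.2 fun h => hA1 ?_
          have := congrArg conj h
          simpa using this.symm
        refine ⟨A / conj A, B * (conj A - A) / ((1 - A) * conj A), ?_, ?_, ?_, ?_, ?_⟩
        · rw [map_div₀, Complex.conj_conj]; field_simp
        · field_simp
        · rw [hD]; simp only [map_mul, map_div₀, map_sub, map_inv₀, map_one, Complex.conj_conj]
          field_simp; ring
        · rw [hD]; simp only [map_mul, map_div₀, map_sub, map_inv₀, map_one, Complex.conj_conj]
          field_simp; ring
        · simp only [map_mul, map_div₀, map_sub, map_one, Complex.conj_conj]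
          field_simp; ring
    · subst hA1
      have hBD : B * conj B = D * conj D := by
        rw [Complex.mul_conj, Complex.mul_conj]
        norm_cast
        rw [Complex.normSq_eq_norm_sq, Complex.normSq_eq_norm_sq, hD]
      refine ⟨1, B - conj D, by simp, by simp, by simp, ?_, ?_⟩
      · simp only [map_sub, Complex.conj_conj, mul_one]; ring
      · simp only [map_sub, Complex.conj_conj]; linear_combination hBD
  have hαabs : ‖α‖ = 1 := by
    have h := congrArg (‖·‖) hα1
    simp only [norm_mul, Complex.norm_conj, norm_one] at h
    nlinarith [norm_nonneg α]
  have hT := affine_measurePreserving α β hαabs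
  have h3' : (B - β) * conj α = conj D := by
    have := congrArg conj h3
    simpa using this
  -- measurability of the integrand
  have hψh' : ψh = fun z => conj C * Complex.exp (conj B * z) := funext hψh
  have hφh' : φh = fun z => conj A * z + conj D := funext hφh
  have hg : Measurable (fun z : ℂ => ENNReal.ofReal
      ((‖ψh z * f (φh z)‖) ^ 2 * Real.exp (-(‖z‖) ^ 2))) := by
    rw [hψh', hφh']
    have hfc : Continuous f := hf.continuous
    fun_prop
  have key := hT.lintegral_comp hg
  rw [← key]
  apply lintegral_congr
  intro w
  congr 1
  -- composed map identities
  have hφeq : conj A * (α * w + β) + conj D = A * w + B := by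
    linear_combination w * h1 + h2
  rw [hψh, hφh, hψ, hφ, hφeq]
  -- the complex identity behind equality of exponents
  set u : ℂ := α * w + β with hu
  have hC2 : (conj B * u) + (B * conj u) - u * conj u -
      ((D * w) + (conj D * conj w) - w * conj w) = 0 := by
    simp only [hu, map_add, map_mul]
    linear_combination w * h3 + (conj w) * h3' + h4 - w * (conj w) * hα1
  have hre : (conj B * u).re * 2 - Complex.normSq u = (D * w).re * 2 - Complex.normSq w := by
    have h := congrArg Complex.re hC2
    simp only [Complex.add_re, Complex.sub_re, Complex.zero_re] at h
    have e1 : (B * conj u).re = (conj B * u).re := by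
      rw [show B * conj u = conj (conj B * u) by simp [map_mul]]
      exact Complex.conj_re _
    have e2 : (conj D * conj w).re = (D * w).re := by
      rw [show conj D * conj w = conj (D * w) by simp [map_mul]]
      exact Complex.conj_re _
    have e3 : (u * conj u).re = Complex.normSq u := by
      rw [Complex.mul_conj]; simp
    have e4 : (w * conj w).re = Complex.normSq w := by
      rw [Complex.mul_conj]; simp
    rw [e1, e2, e3, e4] at h
    linarith
  have hmain : Real.exp ((conj B * u).re) ^ 2 * Real.exp (-(‖u‖) ^ 2) =
      Real.exp ((D * w).re) ^ 2 * Real.exp (-(‖w‖) ^ 2) := by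
    rw [Complex.sq_norm, Complex.sq_norm, pow_two, pow_two, ← Real.exp_add, ← Real.exp_add,
      ← Real.exp_add, ← Real.exp_add]
    congr 1
    linarith
  simp only [norm_mul, Complex.norm_conj, Complex.norm_exp, mul_pow]
  linear_combination (‖C‖ ^ 2 * ‖f (A * w + B)‖ ^ 2) * hmain
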